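/- Assume W satisfies (Icv): for every δ > 0 there exists c_δ > 0 such that for all F ∈ M^{3×3}, if det F ≥ δ then W(F) ≤ c_δ(1+|F|^p). Then W_0 satisfies (Icvbis): for every δ > 0 there exists c_δ > 0 such that for all ξ = (ξ₁|ξ₂) ∈ M^{3×2}, if |ξ₁ ∧ ξ₂| ≥ δ then W_0(ξ) ≤ c_δ(1+|ξ|^p), where ξ₁ ∧ ξ₂ is the cross product of the two columns of ξ. -/

import Mathlib

open scoped ENNReal
open MeasureTheory Filter

noncomputable section

attribute [local instance] Matrix.normedAddCommGroup

/-- `juxt ξ ζ` is the 3×3 matrix whose first two columns are the columns of the 3×2 matrix `ξ`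
and whose third column is `ζ`, i.e. the matrix denoted `(ξ|ζ)` in the paper. -/
def juxt (ξ : Matrix (Fin 3) (Fin 2) ℝ) (ζ : Fin 3 → ℝ) : Matrix (Fin 3) (Fin 3) ℝ :=
  Matrix.of fun i k => Fin.lastCases (ζ i) (fun j => ξ i j) k

/-- `W0 W ξ = inf_{ζ ∈ ℝ³} W (ξ|ζ)`. -/
def W0 (W : Matrix (Fin 3) (Fin 3) ℝ → ℝ≥0∞) (ξ : Matrix (Fin 3) (Fin 2) ℝ) : ℝ≥0∞ :=
  ⨅ ζ : Fin 3 → ℝ, W (juxt ξ ζ)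

lemma juxt_apply_zero (ξ : Matrix (Fin 3) (Fin 2) ℝ) (ζ : Fin 3 → ℝ) (i : Fin 3) :
    juxt ξ ζ i 0 = ξ i 0 := by
  have h : (0 : Fin 3) = Fin.castSucc 0 := rfl
  show Fin.lastCases (ζ i) (fun j => ξ i j) (0 : Fin 3) = ξ i 0
  rw [h, Fin.lastCases_castSucc]

lemma juxt_apply_one (ξ : Matrix (Fin 3) (Fin 2) ℝ) (ζ : Fin 3 → ℝ) (i : Fin 3) :
    juxt ξ ζ i 1 = ξ i 1 := by
  have h : (1 : Fin 3) = Fin.castSucc 1 := rfl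
  show Fin.lastCases (ζ i) (fun j => ξ i j) (1 : Fin 3) = ξ i 1
  rw [h, Fin.lastCases_castSucc]

lemma juxt_apply_two (ξ : Matrix (Fin 3) (Fin 2) ℝ) (ζ : Fin 3 → ℝ) (i : Fin 3) :
    juxt ξ ζ i 2 = ζ i := by
  have h : (2 : Fin 3) = Fin.last 2 := rfl
  show Fin.lastCases (ζ i) (fun j => ξ i j) (2 : Fin 3) = ζ i
  rw [h, Fin.lastCases_last]

lemma juxt_det (ξ : Matrix (Fin 3) (Fin 2) ℝ) (ζ : Fin 3 → ℝ) :
    (juxt ξ ζ).det = dotProduct (crossProduct (fun i => ξ i 0) (fun i => ξ i 1)) ζ := by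
  simp only [Matrix.det_fin_three, juxt_apply_zero, juxt_apply_one, juxt_apply_two,
    crossProduct, dotProduct, Fin.sum_univ_three, LinearMap.mk₂_apply,
    Matrix.cons_val_zero, Matrix.cons_val_one, Matrix.head_cons, LinearMap.coe_mk,
    AddHom.coe_mk, Matrix.cons_val_two, Matrix.tail_cons]
  ring

lemma sq_norm_le_dot (v : Fin 3 → ℝ) : ‖v‖ ^ (2:ℕ) ≤ dotProduct v v := by
  have hS : dotProduct v v = v 0 ^ 2 + v 1 ^ 2 + v 2 ^ 2 := by
    simp [dotProduct, Fin.sum_univ_three]; ring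
  have hS0 : (0:ℝ) ≤ dotProduct v v := by rw [hS]; positivity
  have hnorm : ‖v‖ ≤ Real.sqrt (dotProduct v v) := by
    rw [pi_norm_le_iff_of_nonneg (Real.sqrt_nonneg _)]
    intro i
    have h1 : ‖v i‖ = Real.sqrt (v i ^ 2) := by
      rw [Real.sqrt_sq_eq_abs]; rfl
    rw [h1]
    apply Real.sqrt_le_sqrt
    have h2 : v i * v i ≤ ∑ j, v j * v j :=
      Finset.single_le_sum (f := fun j => v j * v j)
        (fun j _ => mul_self_nonneg _) (Finset.mem_univ i)
    rw [dotProduct]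
    nlinarith [h2]
  calc ‖v‖ ^ (2:ℕ) ≤ Real.sqrt (dotProduct v v) ^ (2:ℕ) := by
        apply pow_le_pow_left₀ (norm_nonneg _) hnorm
    _ = dotProduct v v := Real.sq_sqrt hS0

/-- Lemma 2.2(iii): if `W` satisfies (Icv) then `W₀` satisfies (Icvbis). -/
theorem W0_Icvbis (p C : ℝ) (hp : 1 < p) (hC : 0 < C)
    (W : Matrix (Fin 3) (Fin 3) ℝ → ℝ≥0∞)
    (hWcont : Continuous W)
    (hWcoer : ∀ F : Matrix (Fin 3) (Fin 3) ℝ, ENNReal.ofReal (C * ‖F‖ ^ p) ≤ W F)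
    (hIcv : ∀ δ : ℝ, 0 < δ → ∃ c : ℝ, 0 < c ∧ ∀ F : Matrix (Fin 3) (Fin 3) ℝ,
      δ ≤ F.det → W F ≤ ENNReal.ofReal (c * (1 + ‖F‖ ^ p))) :
    ∀ δ : ℝ, 0 < δ → ∃ c : ℝ, 0 < c ∧ ∀ ξ : Matrix (Fin 3) (Fin 2) ℝ,
      δ ≤ ‖crossProduct (fun i => ξ i 0) (fun i => ξ i 1)‖ →
      W0 W ξ ≤ ENNReal.ofReal (c * (1 + ‖ξ‖ ^ p)) := by
  intro δ hδ
  obtain ⟨c, hc, hcW⟩ := hIcv δ hδ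
  refine ⟨2 * c, by positivity, fun ξ hξ => ?_⟩
  set v := crossProduct (fun i => ξ i 0) (fun i => ξ i 1) with hv
  have hvnorm : 0 < ‖v‖ := lt_of_lt_of_le hδ hξ
  set ζ : Fin 3 → ℝ := ‖v‖⁻¹ • v with hζ
  have hζnorm : ‖ζ‖ = 1 := by
    rw [hζ, norm_smul, norm_inv, norm_norm, inv_mul_cancel₀ (ne_of_gt hvnorm)]
  set F := juxt ξ ζ with hF
  -- determinant bound
  have hdet : δ ≤ F.det := by
    rw [hF, juxt_det, ← hv, hζ, dotProduct_smul]
    have hdot := sq_norm_le_dot v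
    have : ‖v‖ ≤ ‖v‖⁻¹ * dotProduct v v := by
      have h2 := mul_le_mul_of_nonneg_left hdot (le_of_lt (inv_pos.mpr hvnorm))
      have h3 : ‖v‖⁻¹ * ‖v‖ ^ (2:ℕ) = ‖v‖ := by
        field_simp
      linarith
    calc δ ≤ ‖v‖ := hξ
      _ ≤ ‖v‖⁻¹ * dotProduct v v := this
      _ = ‖v‖⁻¹ • dotProduct v v := rfl
  -- norm bound
  have hFnorm : ‖F‖ ≤ max ‖ξ‖ 1 := by
    rw [Matrix.norm_le_iff (le_trans zero_le_one (le_max_right _ _))]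
    intro i k
    refine Fin.lastCases ?_ (fun j => ?_) k
    · have : F i (Fin.last 2) = ζ i := by
        show Fin.lastCases (ζ i) (fun j => ξ i j) (Fin.last 2) = ζ i
        rw [Fin.lastCases_last]
      rw [this]
      calc ‖ζ i‖ ≤ ‖ζ‖ := norm_le_pi_norm ζ i
        _ = 1 := hζnorm
        _ ≤ max ‖ξ‖ 1 := le_max_right _ _
    · have : F i (Fin.castSucc j) = ξ i j := by
        show Fin.lastCases (ζ i) (fun j => ξ i j) (Fin.castSucc j) = ξ i j
        rw [Fin.lastCases_castSucc]
      rw [this]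
      exact le_trans (Matrix.norm_entry_le_entrywise_sup_norm ξ) (le_max_left _ _)
  have hp0 : (0:ℝ) ≤ p := le_of_lt (lt_trans one_pos hp)
  have hrpow : ‖F‖ ^ p ≤ 1 + ‖ξ‖ ^ p := by
    have h1 : ‖F‖ ^ p ≤ (max ‖ξ‖ 1) ^ p :=
      Real.rpow_le_rpow (norm_nonneg _) hFnorm hp0
    rcases max_cases ‖ξ‖ 1 with ⟨heq, _⟩ | ⟨heq, _⟩
    · rw [heq] at h1
      have : (0:ℝ) ≤ 1 := zero_le_one
      linarith
    · rw [heq, Real.one_rpow] at h1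
      have : (0:ℝ) ≤ ‖ξ‖ ^ p := Real.rpow_nonneg (norm_nonneg _) p
      linarith
  have hξp : (0:ℝ) ≤ ‖ξ‖ ^ p := Real.rpow_nonneg (norm_nonneg _) p
  calc W0 W ξ ≤ W F := iInf_le _ ζ
    _ ≤ ENNReal.ofReal (c * (1 + ‖F‖ ^ p)) := hcW F hdet
    _ ≤ ENNReal.ofReal (2 * c * (1 + ‖ξ‖ ^ p)) := by
        apply ENNReal.ofReal_le_ofReal
        nlinarith
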